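/- There exist universal constants c > 0 and C > 0 such that the following holds. Let φ : ℝ → ℂ be a 1-periodic continuous function with M := Σ_{n∈ℤ} |φ̂(n)| < ∞, and let w(x,t) = φ(x) e^{i|φ(x)|² t}. Then for every t with 0 ≤ t ≤ c M^{−2}, one has Σ_{n∈ℤ} |ŵ(n,t)| ≤ C M and sup_{n∈ℤ} |ŵ(n,t)| ≤ C sup_{n∈ℤ} |φ̂(n)|, where ŵ(n,t) = ∫₀¹ w(x,t) e^{−2πinx} dx. -/

import Mathlib

open scoped Real

/-- Fourier coefficient of a 1-periodic function `f : ℝ → ℂ`: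
`f̂(n) = ∫₀¹ f(x) e^{−2πinx} dx`. -/
noncomputable def fourierCoeff1 (f : ℝ → ℂ) (n : ℤ) : ℂ :=
  ∫ x in (0:ℝ)..1, f x * Complex.exp (-2 * (π : ℂ) * Complex.I * (n : ℂ) * (x : ℂ))

/-- Solution `w(x,t) = φ(x) e^{i|φ(x)|² t}` of the dispersionless ODE
`i∂_t w + |w|²w = 0`. -/
noncomputable def odeSol (φ : ℝ → ℂ) (x t : ℝ) : ℂ :=
  φ x * Complex.exp (Complex.I * ((‖φ x‖^2 : ℝ) : ℂ) * (t : ℂ))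

section aux
open Complex MeasureTheory
set_option maxHeartbeats 1000000
set_option linter.unnecessarySimpa false

noncomputable def eFun (n : ℤ) (x : ℝ) : ℂ := Complex.exp (2 * (π:ℂ) * Complex.I * n * x)

lemma eFun_norm (n : ℤ) (x : ℝ) : ‖eFun n x‖ = 1 := by
  have : (2 * (π:ℂ) * Complex.I * n * x) = ((2 * π * n * x : ℝ) : ℂ) * Complex.I := by
    push_cast; ring
  rw [eFun, this, Complex.norm_exp_ofReal_mul_I]

lemma eFun_continuous (n : ℤ) : Continuous (eFun n) := by
  apply Complex.continuous_exp.comp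
  fun_prop

lemma eFun_mul (m n : ℤ) (x : ℝ) : eFun m x * eFun n x = eFun (m + n) x := by
  rw [eFun, eFun, eFun, ← Complex.exp_add]
  push_cast; ring_nf

lemma integral_eFun (k : ℤ) :
    ∫ x in (0:ℝ)..1, eFun k x = if k = 0 then 1 else 0 := by
  rcases eq_or_ne k 0 with hk | hk
  · simp [hk, eFun]
  · have hc : (2 * (π:ℂ) * Complex.I * k) ≠ 0 := by
      simp [Real.pi_ne_zero, Complex.I_ne_zero, hk, Complex.ofReal_ne_zero]
    have : ∀ x : ℝ, eFun k x = Complex.exp ((2 * (π:ℂ) * Complex.I * k) * x) := by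
      intro x; rw [eFun]
    simp_rw [this]
    rw [integral_exp_mul_complex hc]
    have h1 : Complex.exp (2 * (π:ℂ) * Complex.I * k * (1:ℝ)) = 1 := by
      push_cast
      rw [mul_one]
      have := Complex.exp_int_mul_two_pi_mul_I k
      rw [← this]; ring_nf
    have h0 : Complex.exp (2 * (π:ℂ) * Complex.I * k * (0:ℝ)) = 1 := by
      push_cast; rw [mul_zero, Complex.exp_zero]
    rw [h1, h0]
    simp [hk]

def WRep (f : ℝ → ℂ) (a : ℤ → ℂ) : Prop :=
  Summable (fun n => ‖a n‖) ∧ ∀ x : ℝ, HasSum (fun n => a n * eFun n x) (f x)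

lemma fourierCoeff1_eq_of_rep {f : ℝ → ℂ} {a : ℤ → ℂ} (h : WRep f a) (n : ℤ) :
    fourierCoeff1 f n = a n := by
  obtain ⟨hsum, hrep⟩ := h
  have key : ∀ x : ℝ, f x * Complex.exp (-2 * (π : ℂ) * Complex.I * (n : ℂ) * (x : ℂ))
      = ∑' m : ℤ, a m * eFun (m - n) x := by
    intro x
    have h1 : f x = ∑' m, a m * eFun m x := (hrep x).tsum_eq.symm
    have h2 : Complex.exp (-2 * (π : ℂ) * Complex.I * (n : ℂ) * (x : ℂ)) = eFun (-n) x := by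
      rw [eFun]; push_cast; ring_nf
    rw [h1, h2, ← tsum_mul_right]
    congr 1; funext m
    rw [mul_assoc, eFun_mul, sub_eq_add_neg]
  rw [fourierCoeff1]
  simp_rw [key]
  rw [intervalIntegral.integral_of_le zero_le_one]
  rw [MeasureTheory.integral_tsum]
  · have : ∀ m : ℤ, ∫ x in Set.Ioc (0:ℝ) 1, a m * eFun (m - n) x
        = a m * ∫ x in Set.Ioc (0:ℝ) 1, eFun (m - n) x := fun m =>
      MeasureTheory.integral_const_mul _ _
    simp_rw [this, ← intervalIntegral.integral_of_le zero_le_one, integral_eFun, sub_eq_zero]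
    rw [tsum_eq_single n (by intro m hm; simp [hm])]
    simp
  · intro m
    exact (continuous_const.mul (eFun_continuous (m - n))).aestronglyMeasurable.restrict
  · have hval : ∀ m : ℤ, ∫⁻ x in Set.Ioc (0:ℝ) 1, ‖a m * eFun (m - n) x‖₊
        = (‖a m‖₊ : ENNReal) := by
      intro m
      have : ∀ x : ℝ, (‖a m * eFun (m - n) x‖₊ : ENNReal) = (‖a m‖₊ : ENNReal) := by
        intro x
        congr 1
        ext
        rw [coe_nnnorm, coe_nnnorm, norm_mul, eFun_norm, mul_one]
      simp_rw [this]
      rw [MeasureTheory.lintegral_const]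
      simp
    simp_rw [enorm_eq_nnnorm]
    simp_rw [hval]
    rw [← ENNReal.coe_tsum]
    · exact ENNReal.coe_ne_top
    · rw [← NNReal.summable_coe]
      simpa [coe_nnnorm] using hsum

lemma wrep_base {φ : ℝ → ℂ} (hc : Continuous φ) (hper : ∀ x : ℝ, φ (x + 1) = φ x)
    (hsum : Summable (fun n : ℤ => ‖fourierCoeff1 φ n‖)) : WRep φ (fourierCoeff1 φ) := by
  haveI : Fact (0 < (1:ℝ)) := ⟨one_pos⟩
  have hp : Function.Periodic φ 1 := hper
  set F : C(AddCircle (1 : ℝ), ℂ) :=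
    ⟨AddCircle.liftIco (1 : ℝ) 0 φ,
      AddCircle.liftIco_zero_continuous (by rw [← hper 0, zero_add]) hc.continuousOn⟩ with hF
  have hfract : ∀ x : ℝ, Int.fract x = x - (⌊x⌋ : ℝ) * 1 := by
    intro x; rw [mul_one]; exact (Int.self_sub_floor x).symm
  have hFcoe : ∀ x : ℝ, F (x : AddCircle (1 : ℝ)) = φ x := by
    intro x
    have h1 : ((x : ℝ) : AddCircle (1 : ℝ)) = ((Int.fract x : ℝ) : AddCircle (1 : ℝ)) := by
      conv_lhs => rw [show (x:ℝ) = Int.fract x + (⌊x⌋:ℝ) * 1 by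
        rw [hfract x]; ring]
      rw [AddCircle.coe_add, ← zsmul_eq_mul, AddCircle.coe_zsmul, AddCircle.coe_period,
        smul_zero, add_zero]
    have h2 : F ((Int.fract x : ℝ) : AddCircle (1 : ℝ)) = φ (Int.fract x) :=
      AddCircle.liftIco_coe_apply
        (by rw [zero_add]; exact ⟨Int.fract_nonneg x, Int.fract_lt_one x⟩)
    have h3 : φ (Int.fract x) = φ x := by
      rw [hfract x]; exact hp.sub_int_mul_eq ⌊x⌋
    rw [h1, h2, h3]
  have hcoeff : ∀ n : ℤ, fourierCoeff F n = fourierCoeff1 φ n := by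
    intro n
    rw [fourierCoeff_eq_intervalIntegral F n 0, fourierCoeff1, zero_add,
      show (1/(1:ℝ)) = 1 by norm_num, one_smul]
    apply intervalIntegral.integral_congr
    intro x _
    dsimp only
    rw [hFcoe x, smul_eq_mul, mul_comm]
    congr 1
    rw [fourier_coe_apply]
    congr 1
    push_cast
    ring
  have hsF : Summable (fourierCoeff F) := by
    apply Summable.of_norm
    simpa only [hcoeff] using hsum
  refine ⟨hsum, fun x => ?_⟩
  have := has_pointwise_sum_fourier_series_of_summable hsF (x : AddCircle (1 : ℝ))
  rw [hFcoe x] at this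
  convert this using 2 with i
  rw [hcoeff, smul_eq_mul, fourier_coe_apply, eFun]
  push_cast
  ring_nf

noncomputable def convSeq (a b : ℤ → ℂ) (n : ℤ) : ℂ := ∑' m : ℤ, a m * b (n - m)

def shEquiv : ℤ × ℤ ≃ ℤ × ℤ where
  toFun p := (p.1 + p.2, p.1)
  invFun p := (p.2, p.1 - p.2)
  left_inv p := by simp
  right_inv p := by simp

section conv
variable {a b : ℤ → ℂ} (ha : Summable fun n => ‖a n‖) (hb : Summable fun n => ‖b n‖)

include ha hb

lemma conv_norm_summable :
    Summable (fun p : ℤ × ℤ => ‖a p.2 * b (p.1 - p.2)‖) := by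
  rw [← Equiv.summable_iff shEquiv]
  have : ((fun p : ℤ × ℤ => ‖a p.2 * b (p.1 - p.2)‖) ∘ shEquiv)
      = fun p : ℤ × ℤ => ‖a p.1 * b p.2‖ := by
    funext p
    simp [shEquiv]
  rw [this]
  exact ha.mul_norm hb

lemma conv_fiber_summable (n : ℤ) : Summable (fun m : ℤ => ‖a m * b (n - m)‖) :=
  (conv_norm_summable ha hb).comp_injective
    (i := fun m : ℤ => ((n, m) : ℤ × ℤ)) (fun _ _ h => (Prod.mk.injEq _ _ _ _ ▸ h).2 ▸ by
      simpa using congrArg Prod.snd h)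

lemma conv_hasSum (n : ℤ) :
    HasSum (fun m : ℤ => a m * b (n - m)) (convSeq a b n) :=
  ((conv_fiber_summable ha hb n).of_norm).hasSum

lemma conv_norm_le (n : ℤ) :
    ‖convSeq a b n‖ ≤ ∑' m : ℤ, ‖a m‖ * ‖b (n - m)‖ := by
  refine le_trans (norm_tsum_le_tsum_norm ?_) ?_
  · exact conv_fiber_summable ha hb n
  · simp_rw [norm_mul]
    exact le_refl _

lemma conv_norm_fiber_summable (n : ℤ) :
    Summable (fun m : ℤ => ‖a m‖ * ‖b (n - m)‖) := by
  have := conv_fiber_summable ha hb n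
  simpa [norm_mul] using this

lemma conv_bound_summable :
    Summable (fun n : ℤ => ∑' m : ℤ, ‖a m‖ * ‖b (n - m)‖) := by
  have h1 : Summable (fun p : ℤ × ℤ => ‖a p.2‖ * ‖b (p.1 - p.2)‖) := by
    simpa [norm_mul] using conv_norm_summable ha hb
  exact h1.hasSum.prod_fiberwise
    (fun n => ((conv_norm_fiber_summable ha hb n)).hasSum) |>.summable

lemma conv_bound_tsum :
    (∑' n : ℤ, ∑' m : ℤ, ‖a m‖ * ‖b (n - m)‖) = (∑' n, ‖a n‖) * (∑' n, ‖b n‖) := by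
  have h1 : Summable (fun p : ℤ × ℤ => ‖a p.2‖ * ‖b (p.1 - p.2)‖) := by
    simpa [norm_mul] using conv_norm_summable ha hb
  have h2 := h1.hasSum.prod_fiberwise
    (fun n => ((conv_norm_fiber_summable ha hb n)).hasSum)
  rw [h2.tsum_eq]
  rw [← Equiv.tsum_eq shEquiv]
  have h3 : ∀ c : ℤ × ℤ, ‖a (shEquiv c).2‖ * ‖b ((shEquiv c).1 - (shEquiv c).2)‖
      = ‖a c.1‖ * ‖b c.2‖ := by intro c; simp [shEquiv]
  rw [tsum_congr h3]
  exact (Summable.tsum_mul_tsum ha hb (ha.mul_of_nonneg hb (fun _ => norm_nonneg _)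
    (fun _ => norm_nonneg _))).symm

lemma conv_summable : Summable (fun n => ‖convSeq a b n‖) :=
  Summable.of_nonneg_of_le (fun _ => norm_nonneg _) (conv_norm_le ha hb)
    (conv_bound_summable ha hb)

lemma conv_tsum_le :
    (∑' n, ‖convSeq a b n‖) ≤ (∑' n, ‖a n‖) * (∑' n, ‖b n‖) := by
  rw [← conv_bound_tsum ha hb]
  exact Summable.tsum_le_tsum (conv_norm_le ha hb) (conv_summable ha hb) (conv_bound_summable ha hb)

lemma conv_sup_bound (n : ℤ) :
    ‖convSeq a b n‖ ≤ (⨆ m : ℤ, ‖a m‖) * (∑' m, ‖b m‖) := by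
  have hbdd : BddAbove (Set.range fun m : ℤ => ‖a m‖) :=
    ⟨∑' m, ‖a m‖, by rintro - ⟨m, rfl⟩; exact Summable.le_tsum ha m (fun _ _ => norm_nonneg _)⟩
  refine le_trans (conv_norm_le ha hb n) ?_
  have hre : Summable (fun m : ℤ => ‖b (n - m)‖) :=
    (Equiv.summable_iff (Equiv.subLeft n)).mpr hb
  calc (∑' m : ℤ, ‖a m‖ * ‖b (n - m)‖)
      ≤ ∑' m : ℤ, (⨆ k : ℤ, ‖a k‖) * ‖b (n - m)‖ := by
        refine Summable.tsum_le_tsum (fun m => ?_) (conv_norm_fiber_summable ha hb n) (hre.mul_left _)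
        exact mul_le_mul_of_nonneg_right (le_ciSup hbdd m) (norm_nonneg _)
    _ = (⨆ m : ℤ, ‖a m‖) * (∑' m, ‖b m‖) := by
        rw [tsum_mul_left]
        congr 1
        exact (Equiv.tsum_eq (Equiv.subLeft n) fun m => ‖b m‖)

end conv

lemma wrep_mul {f g : ℝ → ℂ} {a b : ℤ → ℂ} (hf : WRep f a) (hg : WRep g b) :
    WRep (fun x => f x * g x) (convSeq a b) := by
  obtain ⟨ha, hfx⟩ := hf
  obtain ⟨hb, hgx⟩ := hg
  refine ⟨conv_summable ha hb, fun x => ?_⟩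
  have heq : ∀ (c : ℤ → ℂ), (fun n => ‖c n * eFun n x‖) = fun n => ‖c n‖ := by
    intro c; funext n; rw [norm_mul, eFun_norm, mul_one]
  have haN : Summable (fun n => ‖a n * eFun n x‖) := by rw [heq]; exact ha
  have hbN : Summable (fun n => ‖b n * eFun n x‖) := by rw [heq]; exact hb
  have hP := (hfx x).mul (hgx x) (summable_mul_of_summable_norm (f := fun n => a n * eFun n x) (g := fun n => b n * eFun n x) haN hbN)
  have hP' : HasSum (fun p : ℤ × ℤ => a p.2 * b (p.1 - p.2) * eFun p.1 x) (f x * g x) := by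
    rw [← Equiv.hasSum_iff shEquiv]
    convert hP using 1
    · rfl
    funext p
    simp only [Function.comp_apply, shEquiv, Equiv.coe_fn_mk, add_sub_cancel_left]
    rw [← eFun_mul p.1 p.2 x]
    ring
  refine hP'.prod_fiberwise (fun n => ?_)
  exact (conv_hasSum ha hb n).mul_right (eFun n x)

lemma wrep_conj {f : ℝ → ℂ} {a : ℤ → ℂ} (hf : WRep f a) :
    WRep (fun x => (starRingEnd ℂ) (f x)) (fun n => (starRingEnd ℂ) (a (-n))) := by
  obtain ⟨ha, hfx⟩ := hf
  constructor
  · simpa [Function.comp_def] using (Equiv.summable_iff (Equiv.neg ℤ)).mpr ha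
  · intro x
    have h1 : HasSum (fun n => (starRingEnd ℂ) (a n * eFun n x)) ((starRingEnd ℂ) (f x)) :=
      (Complex.hasSum_conj' (f := fun n => a n * eFun n x)).mpr ?_
    · have h2 := (Equiv.hasSum_iff (Equiv.neg ℤ)).mpr h1
      convert h2 using 1
      funext n
      simp only [Function.comp_apply, Equiv.neg_apply, map_mul]
      congr 1
      rw [eFun, eFun, ← Complex.exp_conj]
      congr 1
      have : (2 * (π:ℂ) * Complex.I * (-n : ℤ) * x) = ((2 * π * (-n : ℤ) * x : ℝ) : ℂ) * Complex.I := by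
        push_cast; ring
      have h3 : (2 * (π:ℂ) * Complex.I * (n : ℤ) * x) = ((2 * π * (n : ℤ) * x : ℝ) : ℂ) * Complex.I := by
        push_cast; ring
      rw [this, h3, map_mul, Complex.conj_ofReal, Complex.conj_I]
      push_cast; ring
    · exact hfx x

lemma ofReal_norm_sq (z : ℂ) : ((‖z‖^2 : ℝ) : ℂ) = z * (starRingEnd ℂ) z := by
  rw [Complex.mul_conj]
  norm_cast
  rw [Complex.sq_norm]

lemma fact_summable : Summable (fun k : ℕ => (1:ℝ) / (k.factorial : ℝ)) := by
  have := Real.summable_pow_div_factorial 1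
  simpa using this

lemma wrep_ode {φ : ℝ → ℂ} {a : ℤ → ℂ} (hφ : WRep φ a) (t : ℝ) (ht : 0 ≤ t)
    (htM : t * (∑' n : ℤ, ‖a n‖)^2 ≤ 1) :
    ∃ b : ℤ → ℂ, WRep (fun x => odeSol φ x t) b ∧
      (∑' n : ℤ, ‖b n‖) ≤ (∑' k : ℕ, (1:ℝ)/(k.factorial : ℝ)) * ∑' n : ℤ, ‖a n‖ ∧
      ∀ n : ℤ, ‖b n‖ ≤ (∑' k : ℕ, (1:ℝ)/(k.factorial : ℝ)) * ⨆ m : ℤ, ‖a m‖ := by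
  classical
  have ha : Summable (fun n : ℤ => ‖a n‖) := hφ.1
  set M : ℝ := ∑' n : ℤ, ‖a n‖ with hMdef
  have hM0 : 0 ≤ M := tsum_nonneg (fun _ => norm_nonneg _)
  set A : ℝ := ⨆ m : ℤ, ‖a m‖ with hAdef
  have hbdd : BddAbove (Set.range fun m : ℤ => ‖a m‖) :=
    ⟨M, by rintro - ⟨m, rfl⟩; exact Summable.le_tsum ha m (fun _ _ => norm_nonneg _)⟩
  have hA0 : 0 ≤ A := le_trans (norm_nonneg (a 0)) (le_ciSup hbdd 0)
  -- conjugate and |φ|² coefficients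
  set ac : ℤ → ℂ := fun n => (starRingEnd ℂ) (a (-n)) with hacdef
  have hconj : WRep (fun x => (starRingEnd ℂ) (φ x)) ac := wrep_conj hφ
  have hac : Summable (fun n : ℤ => ‖ac n‖) := hconj.1
  have hacM : (∑' n : ℤ, ‖ac n‖) = M := by
    rw [hMdef]
    calc (∑' n : ℤ, ‖ac n‖) = ∑' n : ℤ, ‖a (-n)‖ := by
          refine tsum_congr (fun n => ?_)
          simp [hacdef]
      _ = ∑' n : ℤ, ‖a n‖ := Equiv.tsum_eq (Equiv.neg ℤ) (fun n => ‖a n‖)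
  set q : ℤ → ℂ := convSeq a ac with hqdef
  have hq : WRep (fun x => φ x * (starRingEnd ℂ) (φ x)) q := wrep_mul hφ hconj
  have hqs : Summable (fun n : ℤ => ‖q n‖) := hq.1
  have hqM : (∑' n : ℤ, ‖q n‖) ≤ M * M := by
    have := conv_tsum_le ha hac
    rwa [hacM, ← hMdef] at this
  have hq0 : 0 ≤ ∑' n : ℤ, ‖q n‖ := tsum_nonneg (fun _ => norm_nonneg _)
  -- iterated coefficients
  set c : ℕ → ℤ → ℂ := fun k => Nat.rec a (fun _ ck => convSeq ck q) k with hcdef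
  have hc0 : c 0 = a := rfl
  have hcs : ∀ k, c (k+1) = convSeq (c k) q := fun k => rfl
  have hrep : ∀ k : ℕ, WRep (fun x => φ x * (φ x * (starRingEnd ℂ) (φ x))^k) (c k) := by
    intro k
    induction k with
    | zero =>
        have : (fun x => φ x * (φ x * (starRingEnd ℂ) (φ x))^0) = φ := by
          funext x; rw [pow_zero, mul_one]
        rw [hc0, this]; exact hφ
    | succ k ih =>
        have h2 := wrep_mul ih hq
        have : (fun x => (φ x * (φ x * (starRingEnd ℂ) (φ x))^k) *
            (φ x * (starRingEnd ℂ) (φ x)))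
            = fun x => φ x * (φ x * (starRingEnd ℂ) (φ x))^(k+1) := by
          funext x; rw [pow_succ]; ring
        rw [hcs k]
        rw [this] at h2
        exact h2
  have hS : ∀ k, Summable (fun n => ‖c k n‖) := fun k => (hrep k).1
  have hSle : ∀ k, (∑' n, ‖c k n‖) ≤ M * (M*M)^k := by
    intro k
    induction k with
    | zero => simp [hc0, hMdef]
    | succ k ih =>
        rw [hcs k]
        refine le_trans (conv_tsum_le (hS k) hqs) ?_
        calc (∑' n, ‖c k n‖) * (∑' n, ‖q n‖) ≤ (M * (M*M)^k) * (M*M) :=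
              mul_le_mul ih hqM hq0 (by positivity)
          _ = M * (M*M)^(k+1) := by rw [pow_succ]; ring
  have hsup : ∀ k, ∀ n, ‖c k n‖ ≤ A * (M*M)^k := by
    intro k
    induction k with
    | zero => intro n; simpa [hc0] using le_ciSup hbdd n
    | succ k ih =>
        intro n
        rw [hcs k]
        refine le_trans (conv_sup_bound (hS k) hqs n) ?_
        calc (⨆ m : ℤ, ‖c k m‖) * (∑' n, ‖q n‖) ≤ (A * (M*M)^k) * (M*M) :=
              mul_le_mul (ciSup_le ih) hqM hq0 (by positivity)
          _ = A * (M*M)^(k+1) := by rw [pow_succ]; ring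
  -- the exponential series coefficients
  set coef : ℕ → ℂ := fun k => (Complex.I * (t:ℂ))^k / (k.factorial : ℂ) with hcoefdef
  have hcoefn : ∀ k, ‖coef k‖ = t^k / (k.factorial : ℝ) := by
    intro k
    rw [hcoefdef]
    rw [norm_div, norm_pow, norm_mul, Complex.norm_I, one_mul, Complex.norm_real,
      Real.norm_of_nonneg ht]
    congr 1
    simp
  have htMM : 0 ≤ t * (M*M) ∧ t * (M*M) ≤ 1 := by
    constructor
    · positivity
    · have : M^2 = M * M := sq M
      rw [← this]; exact htM
  have hterm : ∀ k : ℕ, (t^k / (k.factorial:ℝ)) * (M*(M*M)^k) ≤ M * (1/(k.factorial:ℝ)) := by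
    intro k
    have h1 : (t^k / (k.factorial:ℝ)) * (M*(M*M)^k)
        = M * ((t*(M*M))^k * (1/(k.factorial:ℝ))) := by
      rw [mul_pow]; ring
    rw [h1]
    refine mul_le_mul_of_nonneg_left ?_ hM0
    have h2 : (t*(M*M))^k ≤ 1 := pow_le_one₀ htMM.1 htMM.2
    have h3 : (0:ℝ) ≤ 1/(k.factorial:ℝ) := by positivity
    calc (t*(M*M))^k * (1/(k.factorial:ℝ)) ≤ 1 * (1/(k.factorial:ℝ)) :=
          mul_le_mul_of_nonneg_right h2 h3
      _ = 1/(k.factorial:ℝ) := one_mul _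
  have hterm' : ∀ k : ℕ, (t^k / (k.factorial:ℝ)) * (A*(M*M)^k) ≤ A * (1/(k.factorial:ℝ)) := by
    intro k
    have h1 : (t^k / (k.factorial:ℝ)) * (A*(M*M)^k)
        = A * ((t*(M*M))^k * (1/(k.factorial:ℝ))) := by
      rw [mul_pow]; ring
    rw [h1]
    refine mul_le_mul_of_nonneg_left ?_ hA0
    have h2 : (t*(M*M))^k ≤ 1 := pow_le_one₀ htMM.1 htMM.2
    have h3 : (0:ℝ) ≤ 1/(k.factorial:ℝ) := by positivity
    calc (t*(M*M))^k * (1/(k.factorial:ℝ)) ≤ 1 * (1/(k.factorial:ℝ)) :=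
          mul_le_mul_of_nonneg_right h2 h3
      _ = 1/(k.factorial:ℝ) := one_mul _
  set E : ℝ := ∑' k : ℕ, (1:ℝ)/(k.factorial : ℝ) with hEdef
  -- double series
  set F : ℕ × ℤ → ℂ := fun p => coef p.1 * c p.1 p.2 with hFdef
  have hDnorm : ∀ p : ℕ × ℤ, ‖F p‖ = ‖coef p.1‖ * ‖c p.1 p.2‖ := fun p => norm_mul _ _
  have hDrow : ∀ k, Summable (fun n => ‖F (k,n)‖) := by
    intro k
    simp_rw [hDnorm]
    exact (hS k).mul_left _
  have hrowsum : ∀ k, (∑' n, ‖F (k,n)‖) = ‖coef k‖ * ∑' n, ‖c k n‖ := by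
    intro k
    simp_rw [hDnorm]
    exact tsum_mul_left
  have hrowbound : ∀ k, (∑' n, ‖F (k,n)‖) ≤ M * (1/(k.factorial:ℝ)) := by
    intro k
    rw [hrowsum k, hcoefn k]
    refine le_trans ?_ (hterm k)
    exact mul_le_mul_of_nonneg_left (hSle k) (by positivity)
  have hMrowS : Summable (fun k : ℕ => M * (1/(k.factorial:ℝ))) := fact_summable.mul_left M
  have hD : Summable (fun p : ℕ × ℤ => ‖F p‖) := by
    refine (summable_prod_of_nonneg (fun p => norm_nonneg _)).2 ⟨hDrow, ?_⟩
    exact Summable.of_nonneg_of_le (fun k => tsum_nonneg (fun _ => norm_nonneg _))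
      hrowbound hMrowS
  have hF : Summable F := hD.of_norm
  have hinj : ∀ n : ℤ, Function.Injective (fun k : ℕ => ((k, n) : ℕ × ℤ)) := by
    intro n k₁ k₂ h
    simpa using congrArg Prod.fst h
  have hfibn : ∀ n : ℤ, Summable (fun k => ‖F (k,n)‖) := fun n =>
    hD.comp_injective (hinj n)
  have hfibF : ∀ n : ℤ, Summable (fun k => F (k,n)) := fun n => (hfibn n).of_norm
  set b : ℤ → ℂ := fun n => ∑' k : ℕ, F (k,n) with hbdef
  have hble : ∀ n, ‖b n‖ ≤ ∑' k, ‖F (k,n)‖ := fun n => norm_tsum_le_tsum_norm (hfibn n)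
  -- G and its sum
  have hDsw : Summable (fun p : ℤ × ℕ => ‖F (p.2, p.1)‖) :=
    ((Equiv.prodComm ℤ ℕ).summable_iff).mpr hD
  have hGhas : HasSum (fun n : ℤ => ∑' k, ‖F (k,n)‖) (∑' p : ℤ × ℕ, ‖F (p.2, p.1)‖) :=
    hDsw.hasSum.prod_fiberwise (fun n => (hfibn n).hasSum)
  have htotswap : (∑' p : ℤ × ℕ, ‖F (p.2, p.1)‖) = ∑' p : ℕ × ℤ, ‖F p‖ :=
    Equiv.tsum_eq (Equiv.prodComm ℤ ℕ) (fun p : ℕ × ℤ => ‖F p‖)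
  have hrowhas : HasSum (fun k : ℕ => ∑' n, ‖F (k,n)‖) (∑' p : ℕ × ℤ, ‖F p‖) :=
    hD.hasSum.prod_fiberwise (fun k => (hDrow k).hasSum)
  have htotle : (∑' p : ℕ × ℤ, ‖F p‖) ≤ M * E := by
    rw [← hrowhas.tsum_eq]
    calc (∑' k : ℕ, ∑' n, ‖F (k,n)‖) ≤ ∑' k : ℕ, M * (1/(k.factorial:ℝ)) :=
          Summable.tsum_le_tsum hrowbound hrowhas.summable hMrowS
      _ = M * E := by rw [hEdef, tsum_mul_left]
  have hbsummable : Summable (fun n : ℤ => ‖b n‖) :=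
    Summable.of_nonneg_of_le (fun _ => norm_nonneg _) hble hGhas.summable
  have hbtsum : (∑' n : ℤ, ‖b n‖) ≤ E * M := by
    calc (∑' n : ℤ, ‖b n‖) ≤ ∑' n : ℤ, ∑' k, ‖F (k,n)‖ :=
          Summable.tsum_le_tsum hble hbsummable hGhas.summable
      _ = ∑' p : ℕ × ℤ, ‖F p‖ := by rw [hGhas.tsum_eq, htotswap]
      _ ≤ M * E := htotle
      _ = E * M := mul_comm _ _
  have hbsup : ∀ n : ℤ, ‖b n‖ ≤ E * A := by
    intro n
    have hAE : Summable (fun k : ℕ => A * (1/(k.factorial:ℝ))) := fact_summable.mul_left A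
    have h1 : ∀ k : ℕ, ‖F (k,n)‖ ≤ A * (1/(k.factorial:ℝ)) := by
      intro k
      rw [hDnorm, hcoefn]
      refine le_trans ?_ (hterm' k)
      exact mul_le_mul_of_nonneg_left (hsup k n) (by positivity)
    calc ‖b n‖ ≤ ∑' k, ‖F (k,n)‖ := hble n
      _ ≤ ∑' k : ℕ, A * (1/(k.factorial:ℝ)) := Summable.tsum_le_tsum h1 (hfibn n) hAE
      _ = A * E := by rw [hEdef, tsum_mul_left]
      _ = E * A := mul_comm _ _
  -- the representation of the solution
  refine ⟨b, ⟨hbsummable, ?_⟩, hbtsum, hbsup⟩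
  intro x
  set u : ℂ := φ x * (starRingEnd ℂ) (φ x) with hudef
  have hzz : (Complex.I * ((‖φ x‖^2 : ℝ) : ℂ) * (t:ℂ)) = (Complex.I * (t:ℂ)) * u := by
    rw [ofReal_norm_sq, hudef]; ring
  have hz : HasSum (fun k : ℕ => (Complex.I * ((‖φ x‖^2 : ℝ) : ℂ) * (t:ℂ))^k / (k.factorial : ℂ))
      (Complex.exp (Complex.I * ((‖φ x‖^2 : ℝ) : ℂ) * (t:ℂ))) := by
    rw [Complex.exp_eq_exp_ℂ]
    exact NormedSpace.expSeries_div_hasSum_exp _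
  have hw : HasSum (fun k : ℕ => coef k * (φ x * u^k)) (odeSol φ x t) := by
    have h2 := hz.mul_left (φ x)
    have h3 : (fun k : ℕ => φ x * ((Complex.I * ((‖φ x‖^2 : ℝ) : ℂ) * (t:ℂ))^k / (k.factorial : ℂ)))
        = fun k : ℕ => coef k * (φ x * u^k) := by
      funext k
      rw [hzz, mul_pow, hcoefdef]
      ring
    rw [h3] at h2
    exact h2
  set F' : ℕ × ℤ → ℂ := fun p => F p * eFun p.2 x with hF'def
  have hF'norm : Summable (fun p : ℕ × ℤ => ‖F' p‖) := by
    have : (fun p : ℕ × ℤ => ‖F' p‖) = fun p => ‖F p‖ := by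
      funext p
      rw [hF'def, norm_mul, eFun_norm, mul_one]
    rw [this]
    exact hD
  have hF' : Summable F' := hF'norm.of_norm
  have hrows : ∀ k : ℕ, HasSum (fun n : ℤ => F' (k,n)) (coef k * (φ x * u^k)) := by
    intro k
    have h1 := ((hrep k).2 x).mul_left (coef k)
    have h2 : (fun n : ℤ => coef k * (c k n * eFun n x)) = fun n : ℤ => F' (k,n) := by
      funext n
      rw [hF'def, hFdef]
      ring
    rw [h2] at h1
    convert h1 using 2
  have htot : HasSum (fun k : ℕ => coef k * (φ x * u^k)) (∑' p, F' p) :=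
    hF'.hasSum.prod_fiberwise hrows
  have hFsum : HasSum F' (odeSol φ x t) := by
    have : (∑' p, F' p) = odeSol φ x t := htot.unique hw
    rw [← this]
    exact hF'.hasSum
  have hFsw : HasSum (fun p : ℤ × ℕ => F' (p.2, p.1)) (odeSol φ x t) :=
    ((Equiv.prodComm ℤ ℕ).hasSum_iff).mpr hFsum
  refine hFsw.prod_fiberwise (fun n => ?_)
  have h1 : HasSum (fun k : ℕ => F (k, n)) (b n) := (hfibF n).hasSum
  have h2 := h1.mul_right (eFun n x)
  exact h2

end aux

open Complex MeasureTheory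
set_option maxHeartbeats 1000000 in
/-- Wiener algebra (`FL¹`) and `FL^∞` bounds for the dispersionless ODE on
the time scale `t ≲ M^{−2}`, where `M = Σ_n |φ̂(n)|`. -/
theorem ode_wiener_algebra_bounds :
    ∃ c C : ℝ, 0 < c ∧ 0 < C ∧
      ∀ φ : ℝ → ℂ, Continuous φ → (∀ x : ℝ, φ (x + 1) = φ x) →
      Summable (fun n : ℤ => ‖fourierCoeff1 φ n‖) →
      ∀ t : ℝ, 0 ≤ t → t ≤ c / (∑' n : ℤ, ‖fourierCoeff1 φ n‖)^2 →
        Summable (fun n : ℤ => ‖fourierCoeff1 (fun x => odeSol φ x t) n‖) ∧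
        (∑' n : ℤ, ‖fourierCoeff1 (fun x => odeSol φ x t) n‖)
          ≤ C * ∑' n : ℤ, ‖fourierCoeff1 φ n‖ ∧
        ∀ n : ℤ, ‖fourierCoeff1 (fun x => odeSol φ x t) n‖
          ≤ C * ⨆ m : ℤ, ‖fourierCoeff1 φ m‖ := by
  set E : ℝ := ∑' k : ℕ, (1:ℝ)/(k.factorial : ℝ) with hEdef
  have hE1 : (1:ℝ) ≤ E := by
    have := Summable.le_tsum fact_summable 0 (fun k _ => by positivity)
    rw [hEdef]
    simpa using this
  refine ⟨1, E, one_pos, lt_of_lt_of_le one_pos hE1, ?_⟩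
  intro φ hc hper hsum t ht htle
  have hφ : WRep φ (fourierCoeff1 φ) := wrep_base hc hper hsum
  set M : ℝ := ∑' n : ℤ, ‖fourierCoeff1 φ n‖ with hMdef
  have hM0 : 0 ≤ M := tsum_nonneg (fun _ => norm_nonneg _)
  have htM : t * M^2 ≤ 1 := by
    rcases eq_or_lt_of_le hM0 with h | h
    · rw [← h]; simpa using zero_le_one
    · have hM2 : 0 < M^2 := by positivity
      calc t * M^2 ≤ (1 / M^2) * M^2 := mul_le_mul_of_nonneg_right htle (le_of_lt hM2)
        _ = 1 := by field_simp
  obtain ⟨b, hwrep, h1, h2⟩ := wrep_ode hφ t ht htM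
  have hco : ∀ n : ℤ, fourierCoeff1 (fun x => odeSol φ x t) n = b n :=
    fun n => fourierCoeff1_eq_of_rep hwrep n
  refine ⟨?_, ?_, ?_⟩
  · simp_rw [hco]; exact hwrep.1
  · calc (∑' n : ℤ, ‖fourierCoeff1 (fun x => odeSol φ x t) n‖)
        = ∑' n : ℤ, ‖b n‖ := by simp_rw [hco]
      _ ≤ E * M := h1
  · intro n
    rw [hco n]
    exact h2 n
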